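/- An element a of a group G is a left 3-Engel element of G if and only if for every g ∈ G the subgroup ⟨a, a^g⟩ is nilpotent of class at most 2. -/

import Mathlib

/-- Left-normed commutator: `[u,v] = u⁻¹v⁻¹uv`. -/
def cmt {G : Type*} [Group G] (u v : G) : G := u⁻¹ * v⁻¹ * u * v

/-- Conjugation: `u^g = g⁻¹ug`. -/
def cnj {G : Type*} [Group G] (u g : G) : G := g⁻¹ * u * g

/-- A subgroup is nilpotent of class at most `n`. -/
def classLE {G : Type*} [Group G] (H : Subgroup G) (n : ℕ) : Prop :=
  (⊤ : Subgroup ↥H).lowerCentralSeries n = ⊥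

open scoped commutatorElement

section Aux

variable {G : Type*} [Group G]

private lemma comm_of_eq_one {p q : G} (h : p * q * p⁻¹ * q⁻¹ = 1) : p * q = q * p := by
  have e : p * q = (p * q * p⁻¹ * q⁻¹) * (q * p) := by group
  rw [h, one_mul] at e
  exact e

/-- From the left 3-Engel condition, `⁅a, b⁆` commutes with `a` and with `b`
where `b = a^g`. -/
private lemma aux_central (a g : G) (h : ∀ x : G, cmt (cmt (cmt x a) a) a = 1) :
    Commute a ⁅a, g⁻¹ * a * g⁆ ∧ Commute (g⁻¹ * a * g) ⁅a, g⁻¹ * a * g⁆ := by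
  set b : G := g⁻¹ * a * g with hb
  -- Fact 1 : a commutes with b * a * b⁻¹
  have f1 : a * (b * a * b⁻¹) = (b * a * b⁻¹) * a := by
    apply comm_of_eq_one
    have e1 : a * (b * a * b⁻¹) * a⁻¹ * (b * a * b⁻¹)⁻¹
        = (a * a * a) * (cmt (cmt (cmt g a) a) a) * (a * a * a)⁻¹ := by
      simp only [cmt, hb]; group
    rw [h g] at e1
    rw [e1]; group
  -- Fact 2 : b commutes with a * b * a⁻¹
  have f2 : b * (a * b * a⁻¹) = (a * b * a⁻¹) * b := by
    apply comm_of_eq_one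
    have e2 : b * (a * b * a⁻¹) * b⁻¹ * (a * b * a⁻¹)⁻¹
        = (g⁻¹ * a * a * a) * (cmt (cmt (cmt g⁻¹ a) a) a) * (g⁻¹ * a * a * a)⁻¹ := by
      simp only [cmt, hb]; group
    rw [h g⁻¹] at e2
    rw [e2]; group
  constructor
  · have hf1 : Commute a (b * a * b⁻¹) := f1
    have h2 : Commute a (a * (b * a * b⁻¹)⁻¹) := (Commute.refl a).mul_right hf1.inv_right
    have e : a * (b * a * b⁻¹)⁻¹ = ⁅a, b⁆ := by rw [commutatorElement_def]; group
    rwa [e] at h2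
  · have hf2 : Commute b (a * b * a⁻¹) := f2
    have h2 : Commute b ((a * b * a⁻¹) * b⁻¹) := hf2.mul_right (Commute.refl b).inv_right
    have e : (a * b * a⁻¹) * b⁻¹ = ⁅a, b⁆ := by rw [commutatorElement_def]
    rwa [e] at h2

end Aux

theorem stmt4 {G : Type*} [Group G] (a : G) :
    (∀ x : G, cmt (cmt (cmt x a) a) a = 1) ↔
      (∀ g : G, classLE (Subgroup.closure ({a, cnj a g} : Set G)) 2) := by
  constructor
  · -- forward direction
    intro h g
    have hcnj : cnj a g = g⁻¹ * a * g := rfl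
    set b : G := g⁻¹ * a * g with hbdef
    rw [hcnj]
    set H : Subgroup G := Subgroup.closure ({a, b} : Set G) with hH
    obtain ⟨hca, hcb⟩ := aux_central a g h
    have ha : a ∈ H := Subgroup.subset_closure (by simp)
    have hbH : b ∈ H := Subgroup.subset_closure (by simp)
    -- every element of H commutes with c := ⁅a, b⁆
    have hHc : H ≤ Subgroup.centralizer ({⁅a, b⁆} : Set G) := by
      rw [hH, Subgroup.closure_le]
      intro x hx
      rcases hx with hx | hx
      · subst hx
        rw [SetLike.mem_coe, Subgroup.mem_centralizer_iff]
        intro z hz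
        rw [Set.mem_singleton_iff] at hz
        subst hz
        exact hca.symm.eq
      · rw [Set.mem_singleton_iff] at hx
        subst hx
        rw [SetLike.mem_coe, Subgroup.mem_centralizer_iff]
        intro z hz
        rw [Set.mem_singleton_iff] at hz
        subst hz
        exact hcb.symm.eq
    have hcN : ⁅a, b⁆ ∈ Subgroup.centralizer (H : Set G) := by
      rw [Subgroup.mem_centralizer_iff]
      intro z hz
      exact (Subgroup.mem_centralizer_iff.mp (hHc hz) _ rfl).symm
    -- all commutators of elements of H centralize H
    have key : ∀ x y : G, x ∈ H → y ∈ H → ⁅x, y⁆ ∈ Subgroup.centralizer (H : Set G) := by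
      intro x y hx hy
      rw [hH] at hx hy
      induction hx, hy using Subgroup.closure_induction₂ with
      | mem x y hx hy =>
          rcases hx with hx | hx <;> rcases hy with hy | hy
          · subst hx; subst hy; rw [commutatorElement_self]; exact one_mem _
          · rw [Set.mem_singleton_iff] at hy; subst hx; subst hy; exact hcN
          · rw [Set.mem_singleton_iff] at hx; subst hx; subst hy
            rw [← commutatorElement_inv]
            exact inv_mem hcN
          · rw [Set.mem_singleton_iff] at hx hy; subst hx; subst hy; rw [commutatorElement_self]; exact one_mem _
      | one_left x hx => rw [commutatorElement_one_left]; exact one_mem _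
      | one_right x hx => rw [commutatorElement_one_right]; exact one_mem _
      | mul_left x y z hx hy hz h1 h2 =>
          have e : ⁅x * y, z⁆ = x * ⁅y, z⁆ * x⁻¹ * ⁅x, z⁆ := by
            simp only [commutatorElement_def]; group
          have hcomm : x * ⁅y, z⁆ = ⁅y, z⁆ * x :=
            Subgroup.mem_centralizer_iff.mp h2 x hx
          have e2 : ⁅x * y, z⁆ = ⁅y, z⁆ * ⁅x, z⁆ := by
            rw [e, hcomm]; group
          rw [e2]; exact mul_mem h2 h1
      | mul_right y z x hy hz hx h1 h2 =>
          have e : ⁅x, y * z⁆ = ⁅x, y⁆ * (y * ⁅x, z⁆ * y⁻¹) := by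
            simp only [commutatorElement_def]; group
          have hcomm : y * ⁅x, z⁆ = ⁅x, z⁆ * y :=
            Subgroup.mem_centralizer_iff.mp h2 y hy
          have e2 : ⁅x, y * z⁆ = ⁅x, y⁆ * ⁅x, z⁆ := by
            rw [e, hcomm]; group
          rw [e2]; exact mul_mem h1 h2
      | inv_left x y hx hy h1 =>
          have e : ⁅x⁻¹, y⁆ = x⁻¹ * ⁅x, y⁆⁻¹ * x := by
            simp only [commutatorElement_def]; group
          have hcomm : x * ⁅x, y⁆⁻¹ = ⁅x, y⁆⁻¹ * x :=
            Subgroup.mem_centralizer_iff.mp (inv_mem h1) x hx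
          have e2 : ⁅x⁻¹, y⁆ = ⁅x, y⁆⁻¹ := by
            rw [e, mul_assoc, ← hcomm]; group
          rw [e2]; exact inv_mem h1
      | inv_right x y hx hy h1 =>
          have e : ⁅x, y⁻¹⁆ = y⁻¹ * ⁅x, y⁆⁻¹ * y := by
            simp only [commutatorElement_def]; group
          have hcomm : y * ⁅x, y⁆⁻¹ = ⁅x, y⁆⁻¹ * y :=
            Subgroup.mem_centralizer_iff.mp (inv_mem h1) y hy
          have e2 : ⁅x, y⁻¹⁆ = ⁅x, y⁆⁻¹ := by
            rw [e, mul_assoc, ← hcomm]; group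
          rw [e2]; exact inv_mem h1
    -- now conclude nilpotency of class ≤ 2
    show (⊤ : Subgroup ↥H).lowerCentralSeries 2 = ⊥
    have hlcs : (⊤ : Subgroup ↥H).lowerCentralSeries 2 = ⁅⁅(⊤ : Subgroup ↥H), ⊤⁆, ⊤⁆ := rfl
    rw [hlcs, Subgroup.commutator_eq_bot_iff_le_centralizer]
    rw [Subgroup.commutator_le]
    intro u _ v _
    rw [Subgroup.mem_centralizer_iff]
    intro z _
    have hmem : ⁅(u : G), (v : G)⁆ ∈ Subgroup.centralizer (H : Set G) := key _ _ u.2 v.2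
    have hcz : (z : G) * ⁅(u : G), (v : G)⁆ = ⁅(u : G), (v : G)⁆ * (z : G) :=
      Subgroup.mem_centralizer_iff.mp hmem _ z.2
    apply Subtype.ext
    simp only [commutatorElement_def] at hcz ⊢
    push_cast
    simpa [mul_assoc] using hcz
  · -- backward direction
    intro h x
    have h2 : (⊤ : Subgroup ↥(Subgroup.closure ({a, cnj a x} : Set G))).lowerCentralSeries 2 = ⊥ := h x
    set H : Subgroup G := Subgroup.closure ({a, cnj a x} : Set G) with hH
    have ha : a ∈ H := Subgroup.subset_closure (by simp)
    have hb : cnj a x ∈ H := Subgroup.subset_closure (by simp)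
    have m1 : cmt x a ∈ H := by
      have e : cmt x a = (cnj a x)⁻¹ * a := by simp only [cmt, cnj]; group
      rw [e]; exact mul_mem (inv_mem hb) ha
    set A : ↥H := ⟨a, ha⟩ with hA
    set U : ↥H := ⟨cmt x a, m1⟩ with hU
    have step1 : cmt U A ∈ (⊤ : Subgroup ↥H).lowerCentralSeries 1 := by
      have e : cmt U A = ⁅U⁻¹, A⁻¹⁆ := by rw [cmt, commutatorElement_def]; group
      rw [e]
      exact Subgroup.commutator_mem_commutator (Subgroup.mem_top _) (Subgroup.mem_top _)
    have step2 : cmt (cmt U A) A ∈ (⊤ : Subgroup ↥H).lowerCentralSeries 2 := by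
      have e : cmt (cmt U A) A = ⁅(cmt U A)⁻¹, A⁻¹⁆ := by
        rw [cmt, commutatorElement_def]; group
      rw [e]
      exact Subgroup.commutator_mem_commutator (inv_mem step1) (Subgroup.mem_top _)
    rw [h2, Subgroup.mem_bot] at step2
    have coe_eq : cmt (cmt (cmt x a) a) a = ((cmt (cmt U A) A : ↥H) : G) := by
      simp only [cmt, hU, hA]
      push_cast
      ring_nf
    rw [coe_eq, step2, OneMemClass.coe_one]
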